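/- Let Γ be a finite graph, neither complete nor null, k-regular, with chromatic number equal to clique number, and with automorphism group acting primitively on the vertices. Then for any two distinct vertices x, y, the neighbourhoods satisfy |N(x) ∩ N(y)| ≤ k − 2. -/

import Mathlib

set_option linter.unusedSectionVars false

def IsPrimitivePermGroup {X : Type*} (G : Subgroup (Equiv.Perm X)) : Prop :=
  (∀ x y : X, ∃ g ∈ G, g x = y) ∧
  ∀ R : X → X → Prop, Equivalence R →
    (∀ g ∈ G, ∀ x y : X, R x y → R (g x) (g y)) →
    (∀ x y : X, R x y ↔ x = y) ∨ (∀ x y : X, R x y)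

section
variable {X : Type*} [Fintype X] [DecidableEq X] {Γ : SimpleGraph X}

lemma aux_image_clique {t : ℕ} (g : Equiv.Perm X)
    (hg : ∀ u v : X, Γ.Adj u v ↔ Γ.Adj (g u) (g v)) {K : Finset X}
    (hK : Γ.IsNClique t K) : Γ.IsNClique t (K.image g) := by
  constructor
  · intro u hu v hv huv
    simp only [Finset.coe_image, Set.mem_image, Finset.mem_coe] at hu hv
    obtain ⟨p, hp, rfl⟩ := hu
    obtain ⟨q, hq, rfl⟩ := hv
    exact (hg p q).1 (hK.1 hp hq (fun h => huv (congrArg g h)))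
  · rw [Finset.card_image_of_injective _ g.injective, hK.2]

end

theorem stmt4 {X : Type*} [Fintype X] [DecidableEq X] (Γ : SimpleGraph X)
    [DecidableRel Γ.Adj] (k : ℕ)
    (G : Subgroup (Equiv.Perm X))
    (hAut : ∀ g ∈ G, ∀ x y : X, Γ.Adj x y ↔ Γ.Adj (g x) (g y))
    (hPrim : IsPrimitivePermGroup G)
    (hreg : Γ.IsRegularOfDegree k)
    (hchrom : Γ.chromaticNumber = (Γ.cliqueNum : ℕ∞))
    (hEdge : ∃ x y : X, Γ.Adj x y)
    (hNonComplete : ∃ x y : X, x ≠ y ∧ ¬ Γ.Adj x y) :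
    ∀ x y : X, x ≠ y →
      ((Γ.neighborFinset x ∩ Γ.neighborFinset y).card : ℤ) ≤ (k : ℤ) - 2 := by
  classical
  obtain ⟨p₀, q₀, hpq⟩ := hEdge
  obtain ⟨p₁, q₁, hne₁, hnadj₁⟩ := hNonComplete
  set t := Γ.cliqueNum with ht
  have hcol : Γ.Colorable t := by
    rw [← SimpleGraph.chromaticNumber_le_iff_colorable, hchrom]
  obtain ⟨c₀⟩ := hcol
  have hk1 : 1 ≤ k := by
    have hq : q₀ ∈ Γ.neighborFinset p₀ := by
      rw [SimpleGraph.mem_neighborFinset]; exact hpq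
    have := hreg p₀
    rw [SimpleGraph.degree] at this
    have := Finset.card_pos.mpr ⟨q₀, hq⟩
    omega
  intro x y hxy
  by_contra hcon
  push_neg at hcon
  set C := Γ.neighborFinset x ∩ Γ.neighborFinset y with hC
  clear_value C
  have hub : C.card ≤ k := by
    have h1 : C ⊆ Γ.neighborFinset x := hC ▸ Finset.inter_subset_left
    have := Finset.card_le_card h1
    have h2 := hreg x
    rw [SimpleGraph.degree] at h2
    omega
  have hlb : k - 1 ≤ C.card := by omega
  have hmemC : ∀ w, w ∈ C ↔ Γ.Adj x w ∧ Γ.Adj y w := by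
    intro w
    simp [hC, SimpleGraph.mem_neighborFinset]
  by_cases hadj : Γ.Adj x y
  · -- closed twins case
    have hsub : C ⊆ (Γ.neighborFinset x).erase y := by
      intro w hw
      rw [Finset.mem_erase]
      rw [hmemC] at hw
      exact ⟨fun h => Γ.irrefl (h ▸ hw.2), (SimpleGraph.mem_neighborFinset _ _ _).2 hw.1⟩
    have hsub' : C ⊆ (Γ.neighborFinset y).erase x := by
      intro w hw
      rw [Finset.mem_erase]
      rw [hmemC] at hw
      exact ⟨fun h => Γ.irrefl (h ▸ hw.1), (SimpleGraph.mem_neighborFinset _ _ _).2 hw.2⟩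
    have hyx : y ∈ Γ.neighborFinset x := (SimpleGraph.mem_neighborFinset _ _ _).2 hadj
    have hxyn : x ∈ Γ.neighborFinset y := (SimpleGraph.mem_neighborFinset _ _ _).2 hadj.symm
    have hce : ((Γ.neighborFinset x).erase y).card = k - 1 := by
      rw [Finset.card_erase_of_mem hyx]
      have := hreg x; rw [SimpleGraph.degree] at this; omega
    have hce' : ((Γ.neighborFinset y).erase x).card = k - 1 := by
      rw [Finset.card_erase_of_mem hxyn]
      have := hreg y; rw [SimpleGraph.degree] at this; omega
    have hCx : C = (Γ.neighborFinset x).erase y :=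
      Finset.eq_of_subset_of_card_le hsub (by omega)
    have hCy : C = (Γ.neighborFinset y).erase x :=
      Finset.eq_of_subset_of_card_le hsub' (by omega)
    -- pointwise closed-twin
    have hR : ∀ w, (Γ.Adj x w ∨ x = w) ↔ (Γ.Adj y w ∨ y = w) := by
      intro w
      by_cases hwx : w = x
      · subst hwx; simp [hadj.symm, Γ.irrefl]
      by_cases hwy : w = y
      · subst hwy; simp [hadj, Γ.irrefl]
      have h1 : Γ.Adj x w ↔ w ∈ C := by
        rw [hCx, Finset.mem_erase, SimpleGraph.mem_neighborFinset]
        constructor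
        · intro h; exact ⟨fun hh => hwy hh, h⟩
        · tauto
      have h2 : Γ.Adj y w ↔ w ∈ C := by
        rw [hCy, Finset.mem_erase, SimpleGraph.mem_neighborFinset]
        constructor
        · intro h; exact ⟨fun hh => hwx hh, h⟩
        · tauto
      constructor
      · rintro (h | h)
        · exact Or.inl (h2.2 (h1.1 h))
        · exact absurd h.symm hwx
      · rintro (h | h)
        · exact Or.inl (h1.2 (h2.1 h))
        · exact absurd h.symm hwy
    have hinv : ∀ g ∈ G, ∀ u v : X,
        (∀ w, (Γ.Adj u w ∨ u = w) ↔ (Γ.Adj v w ∨ v = w)) →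
        (∀ w, (Γ.Adj (g u) w ∨ g u = w) ↔ (Γ.Adj (g v) w ∨ g v = w)) := by
      intro g hg u v h w
      have e1 : Γ.Adj (g u) w ↔ Γ.Adj u (g⁻¹ w) := by
        conv_lhs => rw [show w = g (g⁻¹ w) by simp]
        exact (hAut g hg u (g⁻¹ w)).symm
      have e2 : Γ.Adj (g v) w ↔ Γ.Adj v (g⁻¹ w) := by
        conv_lhs => rw [show w = g (g⁻¹ w) by simp]
        exact (hAut g hg v (g⁻¹ w)).symm
      have e3 : ∀ z : X, g z = w ↔ z = g⁻¹ w := by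
        intro z
        constructor
        · intro h'; rw [← h']; simp
        · intro h'; rw [h']; simp
      rw [e1, e2, e3, e3]
      exact h (g⁻¹ w)
    rcases hPrim.2 _ ⟨fun u w => Iff.rfl, fun h w => (h w).symm,
        fun h1 h2 w => (h1 w).trans (h2 w)⟩ hinv with htriv | huniv
    · exact hxy ((htriv x y).1 hR)
    · have := (huniv p₁ q₁ q₁)
      rcases this.2 (Or.inr rfl) with h | h
      · exact hnadj₁ h
      · exact hne₁ h
  · -- nonadjacent
    by_cases hkk : C.card = k
    · -- open twins
      have hCx : C = Γ.neighborFinset x := by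
        apply Finset.eq_of_subset_of_card_le (hC ▸ Finset.inter_subset_left)
        have := hreg x; rw [SimpleGraph.degree] at this; omega
      have hCy : C = Γ.neighborFinset y := by
        apply Finset.eq_of_subset_of_card_le (hC ▸ Finset.inter_subset_right)
        have := hreg y; rw [SimpleGraph.degree] at this; omega
      have hR : ∀ w, Γ.Adj x w ↔ Γ.Adj y w := by
        intro w
        rw [← SimpleGraph.mem_neighborFinset, ← SimpleGraph.mem_neighborFinset,
          ← hCx, ← hCy]
      have hinv : ∀ g ∈ G, ∀ u v : X,
          (∀ w, Γ.Adj u w ↔ Γ.Adj v w) →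
          (∀ w, Γ.Adj (g u) w ↔ Γ.Adj (g v) w) := by
        intro g hg u v h w
        have e1 : Γ.Adj (g u) w ↔ Γ.Adj u (g⁻¹ w) := by
          conv_lhs => rw [show w = g (g⁻¹ w) by simp]
          exact (hAut g hg u (g⁻¹ w)).symm
        have e2 : Γ.Adj (g v) w ↔ Γ.Adj v (g⁻¹ w) := by
          conv_lhs => rw [show w = g (g⁻¹ w) by simp]
          exact (hAut g hg v (g⁻¹ w)).symm
        rw [e1, e2]
        exact h (g⁻¹ w)
      rcases hPrim.2 _ ⟨fun u w => Iff.rfl, fun h w => (h w).symm,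
          fun h1 h2 w => (h1 w).trans (h2 w)⟩ hinv with htriv | huniv
      · exact hxy ((htriv x y).1 hR)
      · exact Γ.irrefl ((huniv p₀ q₀ q₀).1 hpq)
    · -- case 3 : card = k - 1, nonadjacent
      have hCc : C.card = k - 1 := by omega
      have hCsx : C ⊆ Γ.neighborFinset x := hC ▸ Finset.inter_subset_left
      have hCsy : C ⊆ Γ.neighborFinset y := hC ▸ Finset.inter_subset_right
      obtain ⟨a, haN, haC⟩ : ∃ a, a ∈ Γ.neighborFinset x ∧ a ∉ C := by
        have hss : C ⊂ Γ.neighborFinset x := by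
          rw [Finset.ssubset_iff_of_subset hCsx]
          by_contra hno
          push_neg at hno
          have heq : Γ.neighborFinset x = C :=
            Finset.eq_of_subset_of_card_le (fun w hw => by
              by_contra hwC
              exact hwC (hno w hw)) (Finset.card_le_card hCsx)
          have := hreg x; rw [SimpleGraph.degree] at this
          rw [heq] at this
          omega
        obtain ⟨a, ha, ha2⟩ := (Finset.ssubset_iff_of_subset hCsx).1 hss
        exact ⟨a, ha, ha2⟩
      have hax : Γ.Adj x a := (SimpleGraph.mem_neighborFinset _ _ _).1 haN
      have hNx : Γ.neighborFinset x = insert a C := by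
        symm
        apply Finset.eq_of_subset_of_card_le
        · intro w hw
          rcases Finset.mem_insert.1 hw with rfl | hw
          · exact haN
          · exact hCsx hw
        · rw [Finset.card_insert_of_notMem haC]
          have := hreg x; rw [SimpleGraph.degree] at this
          omega
      -- a is not adjacent to y
      have hay : ¬ Γ.Adj y a := by
        intro h
        exact haC ((hmemC a).2 ⟨hax, h⟩)
      by_cases hsubc : ∃ K : Finset X, Γ.IsNClique t K ∧ x ∈ K ∧ a ∉ K
      · -- subcase (i): same colour in every colouring
        obtain ⟨K, hK, hxK, haK⟩ := hsubc
        have hyK : y ∉ K := by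
          intro h
          exact hadj (hK.1 hxK h hxy)
        set K' := insert y (K.erase x) with hK'def
        have hwadj : ∀ w ∈ K.erase x, Γ.Adj y w := by
          intro w hw
          obtain ⟨hwx, hwK⟩ := Finset.mem_erase.1 hw
          have hxw : Γ.Adj x w := hK.1 hxK hwK (fun h => hwx h.symm)
          have hwN : w ∈ Γ.neighborFinset x := (SimpleGraph.mem_neighborFinset _ _ _).2 hxw
          rw [hNx, Finset.mem_insert] at hwN
          rcases hwN with rfl | hwC
          · exact absurd hwK haK
          · exact ((hmemC w).1 hwC).2
        have hK' : Γ.IsNClique t K' := by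
          constructor
          · intro u hu v hv huv
            simp only [hK'def, Finset.coe_insert, Set.mem_insert_iff, Finset.mem_coe] at hu hv
            rcases hu with rfl | hu
            · rcases hv with rfl | hv
              · exact absurd rfl huv
              · exact hwadj _ hv
            · rcases hv with rfl | hv
              · exact (hwadj _ hu).symm
              · exact hK.1 (Finset.mem_of_mem_erase hu) (Finset.mem_of_mem_erase hv) huv
          · rw [hK'def, Finset.card_insert_of_notMem, Finset.card_erase_of_mem hxK, hK.2]
            · have ht1 : 1 ≤ t := by
                rw [← hK.2]
                exact Finset.card_pos.mpr ⟨x, hxK⟩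
              omega
            · intro h
              exact hyK (Finset.mem_of_mem_erase h)
        have hsame : ∀ c : Γ.Coloring (Fin t), c x = c y := by
          intro c
          have hinj : Set.InjOn c ↑K' := by
            intro u hu v hv h
            by_contra hne
            exact c.valid (hK'.1 hu hv hne) h
          have himg : (K'.image c).card = t := by
            rw [Finset.card_image_of_injOn hinj, hK'.2]
          have huniv' : K'.image c = Finset.univ := by
            apply Finset.eq_univ_of_card
            rw [himg, Fintype.card_fin]
          have hcx : c x ∈ K'.image c := by rw [huniv']; exact Finset.mem_univ _
          obtain ⟨z, hz, hcz⟩ := Finset.mem_image.1 hcx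
          rw [hK'def, Finset.mem_insert] at hz
          rcases hz with rfl | hz
          · exact hcz.symm
          · obtain ⟨hzx, hzK⟩ := Finset.mem_erase.1 hz
            have : Γ.Adj x z := hK.1 hxK hzK (fun h => hzx h.symm)
            exact absurd hcz.symm (c.valid this)
        have hinv : ∀ g ∈ G, ∀ u v : X,
            (∀ c : Γ.Coloring (Fin t), c u = c v) →
            (∀ c : Γ.Coloring (Fin t), c (g u) = c (g v)) := by
          intro g hg u v h c
          exact h (SimpleGraph.Coloring.mk (fun z => c (g z))
            (fun {p q} hpq' => c.valid ((hAut g hg p q).1 hpq')))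
        rcases hPrim.2 _ ⟨fun u c => rfl, fun h c => (h c).symm,
            fun h1 h2 c => (h1 c).trans (h2 c)⟩ hinv with htriv | huniv
        · exact hxy ((htriv x y).1 hsame)
        · exact c₀.valid hpq (huniv p₀ q₀ c₀)
      · -- subcase (ii): every t-clique through x contains a
        push_neg at hsubc
        obtain ⟨g₀, hg₀G, hg₀⟩ := hPrim.1 x a
        set 𝒜 := Finset.univ.filter (fun K : Finset X => Γ.IsNClique t K ∧ x ∈ K) with h𝒜
        set ℬ := Finset.univ.filter (fun K : Finset X => Γ.IsNClique t K ∧ a ∈ K) with hℬ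
        have hAB : 𝒜 ⊆ ℬ := by
          intro K hK
          rw [h𝒜, Finset.mem_filter] at hK
          rw [hℬ, Finset.mem_filter]
          exact ⟨Finset.mem_univ _, hK.2.1, hsubc K hK.2.1 hK.2.2⟩
        have hBA : ℬ.card ≤ 𝒜.card := by
          apply Finset.card_le_card_of_injOn (fun K => K.image (g₀⁻¹ : Equiv.Perm X))
          · intro K hK
            rw [Finset.mem_coe, hℬ, Finset.mem_filter] at hK
            rw [Finset.mem_coe, h𝒜, Finset.mem_filter]
            refine ⟨Finset.mem_univ _, aux_image_clique _ (fun u v => hAut g₀⁻¹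
              (inv_mem hg₀G) u v) hK.2.1, ?_⟩
            rw [Finset.mem_image]
            exact ⟨a, hK.2.2, by rw [← hg₀]; simp⟩
          · intro K1 _ K2 _ h
            exact Finset.image_injective (g₀⁻¹ : Equiv.Perm X).injective h
        have hABeq : 𝒜 = ℬ := Finset.eq_of_subset_of_card_le hAB hBA
        have hxa : ∀ K : Finset X, Γ.IsNClique t K → (x ∈ K ↔ a ∈ K) := by
          intro K hK
          constructor
          · intro h; exact hsubc K hK h
          · intro h
            have : K ∈ ℬ := by rw [hℬ, Finset.mem_filter]; exact ⟨Finset.mem_univ _, hK, h⟩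
            rw [← hABeq, h𝒜, Finset.mem_filter] at this
            exact this.2.2
        have hinv : ∀ g ∈ G, ∀ u v : X,
            (∀ K : Finset X, Γ.IsNClique t K → (u ∈ K ↔ v ∈ K)) →
            (∀ K : Finset X, Γ.IsNClique t K → (g u ∈ K ↔ g v ∈ K)) := by
          intro g hg u v h K hK
          have hK' : Γ.IsNClique t (K.image (g⁻¹ : Equiv.Perm X)) :=
            aux_image_clique _ (fun p q => hAut g⁻¹ (inv_mem hg) p q) hK
          have e : ∀ z : X, z ∈ K.image (g⁻¹ : Equiv.Perm X) ↔ g z ∈ K := by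
            intro z
            rw [Finset.mem_image]
            constructor
            · rintro ⟨w, hw, rfl⟩; simpa using hw
            · intro h'; exact ⟨g z, h', by simp⟩
          have := h _ hK'
          rw [e, e] at this
          exact this
        rcases hPrim.2 _ ⟨fun u K hK => Iff.rfl, fun h K hK => (h K hK).symm,
            fun h1 h2 K hK => (h1 K hK).trans (h2 K hK)⟩ hinv with htriv | huniv
        · exact hax.ne ((htriv x a).1 hxa)
        · obtain ⟨K₀, hK₀⟩ := SimpleGraph.exists_isNClique_cliqueNum (G := Γ)
          have ht2 : 2 ≤ t := by
            have : ({p₀, q₀} : Finset X).card ≤ Γ.cliqueNum := by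
              apply SimpleGraph.IsClique.card_le_cliqueNum
              rw [Finset.coe_insert, Finset.coe_singleton]
              exact SimpleGraph.isClique_pair.2 (fun _ => hpq)
            rw [Finset.card_insert_of_notMem (by simp [hpq.ne]), Finset.card_singleton] at this
            omega
          have hK₀ne : K₀.Nonempty := by
            rw [← Finset.card_pos, hK₀.2]
            omega
          obtain ⟨u₀, hu₀⟩ := hK₀ne
          have hp₁ : p₁ ∈ K₀ := (huniv p₁ u₀ K₀ hK₀).2 hu₀
          have hq₁ : q₁ ∈ K₀ := (huniv q₁ u₀ K₀ hK₀).2 hu₀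
          exact hnadj₁ (hK₀.1 hp₁ hq₁ hne₁)
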